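/- Let ρ be a density operator (a positive, trace-class operator of trace one) on a separable complex Hilbert space H, with eigenvalue sequence λ = {λ n}_{n∈ℕ} sorted in decreasing order and counted with multiplicity, and let {e n}_{n∈ℕ} be an orthonormal basis of H. Let p denote the decreasing rearrangement of the diagonal sequence {⟨e n, ρ e n⟩}_{n∈ℕ}. Then for every convex function φ : [0,1] → ℝ with φ(0) = 0 and every strictly decreasing h : ℝ → ℝ, assuming φ ∘ λ and φ ∘ p are summable, h(∑_{n∈ℕ} φ(λ n)) ≤ h(∑_{n∈ℕ} φ(p n)); that is, 𝐇_{(h,φ)}(ρ) ≤ H_{(h,φ)}(p). -/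

import Mathlib

open scoped InnerProductSpace


open Finset Filter

/-- right-derivative-like quantity -/
noncomputable def rdAux (φ : ℝ → ℝ) (x : ℝ) : ℝ :=
  sInf ((fun y => (φ y - φ x) / (y - x)) '' Set.Ioc x 1)

section rd

variable {φ : ℝ → ℝ} (hφ : ConvexOn ℝ (Set.Icc (0:ℝ) 1) φ) (hφ0 : φ 0 = 0)

lemma secant (hφ : ConvexOn ℝ (Set.Icc (0:ℝ) 1) φ) {a x y : ℝ}
    (ha : a ∈ Set.Icc (0:ℝ) 1) (hx : x ∈ Set.Icc (0:ℝ) 1) (hy : y ∈ Set.Icc (0:ℝ) 1)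
    (hxa : x ≠ a) (hya : y ≠ a) (hxy : x ≤ y) :
    (φ x - φ a) / (x - a) ≤ (φ y - φ a) / (y - a) :=
  hφ.secant_mono ha hx hy hxa hya hxy

/-- slope from the left is at most slopes to the right -/
lemma slope_le_slope_right (hφ : ConvexOn ℝ (Set.Icc (0:ℝ) 1) φ)
    {a x z : ℝ} (ha : 0 ≤ a) (hax : a < x) (hxz : x < z) (hz : z ≤ 1) :
    (φ x - φ a) / (x - a) ≤ (φ z - φ x) / (z - x) := by
  have h := hφ.secant_mono (a := x) (x := a) (y := z)
    ⟨by linarith, by linarith⟩ ⟨by linarith, by linarith⟩ ⟨by linarith, by linarith⟩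
    hax.ne hxz.ne' (le_trans hax.le hxz.le)
  calc (φ x - φ a) / (x - a) = (φ a - φ x) / (a - x) := by rw [← neg_div_neg_eq]; ring_nf
  _ ≤ (φ z - φ x) / (z - x) := h

lemma rdAux_le (hφ : ConvexOn ℝ (Set.Icc (0:ℝ) 1) φ) {x y : ℝ}
    (hx : 0 < x) (hxy : x < y) (hy : y ≤ 1) :
    rdAux φ x ≤ (φ y - φ x) / (y - x) := by
  apply csInf_le
  · refine ⟨(φ x - φ 0) / (x - 0), ?_⟩
    rintro b ⟨z, hz, rfl⟩
    exact slope_le_slope_right hφ le_rfl hx hz.1 hz.2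
  · exact ⟨y, ⟨hxy, hy⟩, rfl⟩

lemma le_rdAux (hφ : ConvexOn ℝ (Set.Icc (0:ℝ) 1) φ) {a x : ℝ}
    (ha : 0 ≤ a) (hax : a < x) (hx : x < 1) :
    (φ x - φ a) / (x - a) ≤ rdAux φ x := by
  refine le_csInf (Set.Nonempty.image _ ⟨1, hx, le_rfl⟩) ?_
  rintro b ⟨z, hz, rfl⟩
  exact slope_le_slope_right hφ ha hax hz.1 hz.2

lemma slope0_le_rdAux (hφ : ConvexOn ℝ (Set.Icc (0:ℝ) 1) φ) (hφ0 : φ 0 = 0) {x : ℝ}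
    (hx : 0 < x) (hx1 : x < 1) : φ x / x ≤ rdAux φ x := by
  have := le_rdAux hφ le_rfl hx hx1
  rwa [hφ0, sub_zero, sub_zero] at this

lemma rdAux_mono (hφ : ConvexOn ℝ (Set.Icc (0:ℝ) 1) φ) {x y : ℝ}
    (hx : 0 < x) (hxy : x ≤ y) (hy : y < 1) :
    rdAux φ x ≤ rdAux φ y := by
  rcases eq_or_lt_of_le hxy with rfl | hlt
  · exact le_rfl
  · exact (rdAux_le hφ hx hlt hy.le).trans (le_rdAux hφ hx.le hlt hy)

lemma slope0_mono (hφ : ConvexOn ℝ (Set.Icc (0:ℝ) 1) φ) (hφ0 : φ 0 = 0) {x y : ℝ}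
    (hx : 0 < x) (hxy : x ≤ y) (hy : y ≤ 1) :
    φ x / x ≤ φ y / y := by
  rcases eq_or_lt_of_le hxy with rfl | hlt
  · exact le_rfl
  · have := secant hφ (a := 0) (x := x) (y := y)
      ⟨le_rfl, zero_le_one⟩ ⟨hx.le, le_trans hxy hy⟩ ⟨(hx.trans_le hxy).le, hy⟩
      hx.ne' (hx.trans_le hxy).ne' hxy
    rwa [hφ0, sub_zero, sub_zero, sub_zero, sub_zero] at this

end rd

lemma schur_helper (φ : ℝ → ℝ) (hφ : ConvexOn ℝ (Set.Icc (0:ℝ) 1) φ) (hφ0 : φ 0 = 0)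
    (lam p : ℕ → ℝ) (hl0 : ∀ n, 0 ≤ lam n) (hla : Antitone lam)
    (hls : Summable lam) (hl1 : ∑' n, lam n = 1)
    (hp0 : ∀ n, 0 ≤ p n) (hpa : Antitone p) (hps : Summable p) (hp1 : ∑' n, p n = 1)
    (hmaj : ∀ N, ∑ i ∈ Finset.range N, p i ≤ ∑ i ∈ Finset.range N, lam i)
    (hsl : Summable (fun n => φ (lam n))) (hsp : Summable (fun n => φ (p n))) :
    ∑' n, φ (p n) ≤ ∑' n, φ (lam n) := by
  -- basic bounds
  have hp_le1 : ∀ n, p n ≤ 1 := by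
    intro n
    rw [← hp1]
    exact Summable.le_tsum hps n (fun j _ => hp0 j)
  have hl_le1 : ∀ n, lam n ≤ 1 := by
    intro n
    rw [← hl1]
    exact Summable.le_tsum hls n (fun j _ => hl0 j)
  have hpI : ∀ n, p n ∈ Set.Icc (0:ℝ) 1 := fun n => ⟨hp0 n, hp_le1 n⟩
  have hlI : ∀ n, lam n ∈ Set.Icc (0:ℝ) 1 := fun n => ⟨hl0 n, hl_le1 n⟩
  -- if some p j = 1 then all other entries vanish
  have haux : ∀ j k, p j = 1 → k ≠ j → p k = 0 := by
    intro j k hj hkj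
    by_contra hk
    have hk' : 0 < p k := lt_of_le_of_ne (hp0 k) (Ne.symm hk)
    have : ∑ i ∈ ({j, k} : Finset ℕ), p i ≤ 1 := by
      rw [← hp1]
      exact Summable.sum_le_tsum _ (fun i _ => hp0 i) hps
    rw [Finset.sum_pair (Ne.symm hkj), hj] at this
    linarith
  -- p i = 1 impossible when lam i < p i
  have hp1lt : ∀ i, lam i < p i → p i < 1 := by
    intro i hi
    rcases lt_or_eq_of_le (hp_le1 i) with h | h
    · exact h
    · exfalso
      rcases Nat.eq_zero_or_pos i with rfl | hipos
      · have := hmaj 1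
        simp only [Finset.sum_range_one] at this
        linarith
      · have h0 : p 0 = 0 ∨ p 0 = 1 := by
          rcases eq_or_ne 0 i with h' | h'
          · exact Or.inr (h' ▸ h)
          · exact Or.inl (haux i 0 h h')
        rcases h0 with h0 | h0
        · have := hpa (Nat.zero_le i)
          rw [h0] at this
          linarith [hp0 i]
        · have := haux 0 i h0 (Nat.pos_iff_ne_zero.mp hipos)
          linarith
  have hpj_lt1 : ∀ j i, j ≤ i → lam i < p i → p j < 1 := by
    intro j i hji hi
    rcases lt_or_eq_of_le (hp_le1 j) with h | h
    · exact h
    · exfalso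
      rcases eq_or_ne i j with rfl | hij
      · exact absurd h (hp1lt i hi).ne
      · have := haux j i h hij
        rw [this] at hi
        exact absurd (hl0 i) (not_le.mpr hi)
  -- the subgradient-like sequence
  set g : ℕ → ℝ := fun i =>
    if 0 < p i then rdAux φ (p i) else if 0 < lam i then φ (lam i) / lam i else 0 with hg
  have hne : ∀ i : ℕ, (Finset.range (i+1)).Nonempty :=
    fun i => Finset.nonempty_range_iff.mpr (Nat.succ_ne_zero i)
  set c : ℕ → ℝ := fun i => (Finset.range (i+1)).inf' (hne i) g with hc
  have hcanti : Antitone c := by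
    intro i j hij
    exact Finset.inf'_mono g (Finset.range_subset_range.mpr (by omega)) (hne i)
  have hc_le_g : ∀ i, c i ≤ g i :=
    fun i => Finset.inf'_le g (Finset.self_mem_range_succ i)
  -- per-index inequality
  have key : ∀ i, φ (p i) - φ (lam i) ≤ c i * (p i - lam i) := by
    intro i
    rcases lt_trichotomy (p i) (lam i) with hlt | heq | hgt
    · have hB : 0 < lam i - p i := by linarith
      have hslope : c i ≤ (φ (lam i) - φ (p i)) / (lam i - p i) := by
        refine le_trans (hc_le_g i) ?_
        rcases lt_or_eq_of_le (hp0 i) with hpi | hpi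
        · have hgi : g i = rdAux φ (p i) := by simp only [hg]; rw [if_pos hpi]
          rw [hgi]
          exact rdAux_le hφ hpi hlt (hl_le1 i)
        · have hli : 0 < lam i := by linarith
          have hpi' : p i = 0 := hpi.symm
          have hgi : g i = φ (lam i) / lam i := by
            simp only [hg]
            rw [if_neg (by rw [hpi']; exact lt_irrefl 0), if_pos hli]
          rw [hgi, hpi', hφ0, sub_zero, sub_zero]
      have := (le_div_iff₀ hB).mp hslope
      linarith
    · rw [heq]; simp
    · have hB : 0 < p i - lam i := by linarith
      have hpi1 : p i < 1 := hp1lt i hgt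
      have hpi0 : 0 < p i := lt_of_le_of_lt (hl0 i) hgt
      have hslope : (φ (p i) - φ (lam i)) / (p i - lam i) ≤ c i := by
        rw [hc]
        apply Finset.le_inf'
        intro j hj
        have hji : j ≤ i := Nat.lt_succ_iff.mp (Finset.mem_range.mp hj)
        have hpj : 0 < p j := lt_of_lt_of_le hpi0 (hpa hji)
        have hpj1 : p j < 1 := hpj_lt1 j i hji hgt
        rw [hg]
        simp only [hpj, if_pos]
        exact le_trans (le_rdAux hφ (hl0 i) hgt hpi1)
          (rdAux_mono hφ hpi0 (hpa hji) hpj1)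
      have := (div_le_iff₀ hB).mp hslope
      linarith
  -- tail control
  have htail : ∀ N : ℕ, 1 ≤ N →
      c (N-1) * (∑ i ∈ Finset.range N, p i - ∑ i ∈ Finset.range N, lam i)
        ≤ ∑' k, |φ (p (k + N))| := by
    intro N hN
    have hpshift : Summable (fun k => p (k + N)) := (summable_nat_add_iff N).mpr hps
    have habs : Summable (fun k => |φ (p (k + N))|) :=
      ((summable_nat_add_iff N).mpr hsp).abs
    have hRnonneg : (0:ℝ) ≤ ∑' k, |φ (p (k + N))| :=
      tsum_nonneg (fun k => abs_nonneg _)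
    set S : ℝ := ∑ i ∈ Finset.range N, p i - ∑ i ∈ Finset.range N, lam i with hS
    have hS0 : S ≤ 0 := by
      have := hmaj N; rw [hS]; linarith
    have hnegS : -S ≤ ∑' k, p (k + N) := by
      have h1 : ∑ i ∈ Finset.range N, p i + ∑' k, p (k + N) = 1 := by
        rw [Summable.sum_add_tsum_nat_add N hps, hp1]
      have h2 : ∑ i ∈ Finset.range N, lam i ≤ 1 := by
        rw [← hl1]; exact Summable.sum_le_tsum _ (fun i _ => hl0 i) hls
      rw [hS]; linarith
    rcases le_or_gt 0 (c (N-1)) with hcpos | hcneg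
    · calc c (N-1) * S ≤ 0 := mul_nonpos_of_nonneg_of_nonpos hcpos hS0
      _ ≤ _ := hRnonneg
    · have hstep : ∀ k, (-(c (N-1))) * p (k + N) ≤ |φ (p (k + N))| := by
        intro k
        rcases lt_or_eq_of_le (hp0 (k+N)) with hq | hq
        · -- q > 0
          obtain ⟨j, hj, hcj⟩ := Finset.exists_mem_eq_inf' (hne (N-1)) g
          have hjN : j < N := by
            have := Finset.mem_range.mp hj; omega
          have hpj : 0 < p j := lt_of_lt_of_le hq (hpa (by omega))
          have hgj : g j = rdAux φ (p j) := by rw [hg]; simp [hpj]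
          have hpj1 : p j < 1 := by
            rcases lt_or_eq_of_le (hp_le1 j) with h | h
            · exact h
            · exfalso
              have := haux j (k+N) h (by omega)
              rw [this] at hq; exact lt_irrefl 0 hq
          have hcj' : c (N-1) = g j := hcj
          have hcval : φ (p (k+N)) / p (k+N) ≤ c (N-1) := by
            rw [hcj', hgj]
            exact le_trans (slope0_mono hφ hφ0 hq (hpa (by omega)) (hp_le1 j))
              (slope0_le_rdAux hφ hφ0 hpj hpj1)
          have : φ (p (k+N)) ≤ c (N-1) * p (k+N) := by
            have := (div_le_iff₀ hq).mp hcval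
            linarith
          calc (-(c (N-1))) * p (k + N) = -(c (N-1) * p (k+N)) := by ring
          _ ≤ -(φ (p (k+N))) := by linarith
          _ ≤ |φ (p (k + N))| := neg_le_abs _
        · rw [← hq]
          simp [hφ0]
      calc c (N-1) * S = (-(c (N-1))) * (-S) := by ring
      _ ≤ (-(c (N-1))) * (∑' k, p (k + N)) := by
          apply mul_le_mul_of_nonneg_left hnegS (by linarith)
      _ = ∑' k, (-(c (N-1))) * p (k + N) := (tsum_mul_left).symm
      _ ≤ ∑' k, |φ (p (k + N))| :=
          Summable.tsum_le_tsum hstep (hpshift.mul_left _) habs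
  -- main finite estimate
  have hmain : ∀ N : ℕ, 1 ≤ N →
      ∑ i ∈ Finset.range N, (φ (p i) - φ (lam i)) ≤ ∑' k, |φ (p (k + N))| := by
    intro N hN
    have h1 : ∑ i ∈ Finset.range N, (φ (p i) - φ (lam i))
        ≤ ∑ i ∈ Finset.range N, c i * (p i - lam i) :=
      Finset.sum_le_sum (fun i _ => key i)
    have h2 : ∑ i ∈ Finset.range N, c i * (p i - lam i)
        = c (N-1) * (∑ i ∈ Finset.range N, (p i - lam i))
          - ∑ i ∈ Finset.range (N-1), (c (i+1) - c i) * (∑ j ∈ Finset.range (i+1), (p j - lam j)) := by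
      simpa [smul_eq_mul] using Finset.sum_range_by_parts c (fun i => p i - lam i) N
    have h3 : ∀ i ∈ Finset.range (N-1),
        0 ≤ (c (i+1) - c i) * (∑ j ∈ Finset.range (i+1), (p j - lam j)) := by
      intro i _
      have ha : c (i+1) - c i ≤ 0 := by have := hcanti (Nat.le_succ i); linarith
      have hb : ∑ j ∈ Finset.range (i+1), (p j - lam j) ≤ 0 := by
        rw [Finset.sum_sub_distrib]
        have := hmaj (i+1); linarith
      nlinarith [mul_nonneg (neg_nonneg.2 ha) (neg_nonneg.2 hb)]
    have h4 : 0 ≤ ∑ i ∈ Finset.range (N-1), (c (i+1) - c i) * (∑ j ∈ Finset.range (i+1), (p j - lam j)) :=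
      Finset.sum_nonneg h3
    have h5 := htail N hN
    calc ∑ i ∈ Finset.range N, (φ (p i) - φ (lam i))
        ≤ ∑ i ∈ Finset.range N, c i * (p i - lam i) := h1
    _ ≤ c (N-1) * (∑ i ∈ Finset.range N, p i - ∑ i ∈ Finset.range N, lam i) := by
        rw [h2, Finset.sum_sub_distrib]; linarith [h4]
    _ ≤ ∑' k, |φ (p (k + N))| := h5
  -- take limits
  have hlhs : Tendsto (fun N => ∑ i ∈ Finset.range N, (φ (p i) - φ (lam i))) atTop
      (nhds (∑' n, φ (p n) - ∑' n, φ (lam n))) :=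
    (hsp.hasSum.sub hsl.hasSum).tendsto_sum_nat
  have hrhs : Tendsto (fun N => ∑' k, |φ (p (k + N))|) atTop (nhds 0) :=
    tendsto_sum_nat_add (fun n => |φ (p n)|)
  have : ∑' n, φ (p n) - ∑' n, φ (lam n) ≤ 0 := by
    refine le_of_tendsto_of_tendsto hlhs hrhs ?_
    filter_upwards [eventually_ge_atTop 1] with N hN
    exact hmain N hN
  linarith


open scoped InnerProductSpace


lemma maj_aux (lam C : ℕ → ℝ) (N : ℕ) (hl0 : ∀ n, 0 ≤ lam n) (hla : Antitone lam)
    (hls : Summable lam) (hC0 : ∀ m, 0 ≤ C m) (hC1 : ∀ m, C m ≤ 1)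
    (hCs : Summable C) (hCN : ∑' m, C m ≤ N) :
    ∑' m, lam m * C m ≤ ∑ m ∈ Finset.range N, lam m := by
  have hsum : Summable (fun m => lam m * C m) :=
    Summable.of_nonneg_of_le (fun m => mul_nonneg (hl0 m) (hC0 m))
      (fun m => by nlinarith [hl0 m, hC1 m, hC0 m]) hls
  have hsplit := Summable.sum_add_tsum_nat_add N hsum
  have htail : ∑' k, lam (k+N) * C (k+N) ≤ lam N * ((N : ℝ) - ∑ m ∈ Finset.range N, C m) := by
    have h1 : ∑' k, lam (k+N) * C (k+N) ≤ ∑' k, lam N * C (k+N) := by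
      refine Summable.tsum_le_tsum ?_ ((summable_nat_add_iff N).mpr hsum)
        (((summable_nat_add_iff N).mpr hCs).mul_left _)
      intro k
      exact mul_le_mul_of_nonneg_right (hla (by omega)) (hC0 _)
    have h2 : ∑' k, lam N * C (k+N) = lam N * ∑' k, C (k+N) := tsum_mul_left
    have h3 : ∑' k, C (k+N) ≤ (N : ℝ) - ∑ m ∈ Finset.range N, C m := by
      have := Summable.sum_add_tsum_nat_add N hCs
      linarith
    calc ∑' k, lam (k+N) * C (k+N) ≤ lam N * ∑' k, C (k+N) := by rw [← h2]; exact h1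
    _ ≤ lam N * ((N : ℝ) - ∑ m ∈ Finset.range N, C m) :=
        mul_le_mul_of_nonneg_left h3 (hl0 N)
  have hfin : ∑ m ∈ Finset.range N, lam m * C m
      + lam N * ((N : ℝ) - ∑ m ∈ Finset.range N, C m) ≤ ∑ m ∈ Finset.range N, lam m := by
    have hrw : lam N * ((N : ℝ) - ∑ m ∈ Finset.range N, C m)
        = ∑ m ∈ Finset.range N, lam N * (1 - C m) := by
      rw [← Finset.mul_sum, Finset.sum_sub_distrib]
      simp
    rw [hrw, ← Finset.sum_add_distrib]
    apply Finset.sum_le_sum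
    intro m hm
    have h1 : lam N ≤ lam m := hla (le_of_lt (Finset.mem_range.mp hm))
    nlinarith [hC0 m, hC1 m, hl0 N]
  linarith


set_option maxHeartbeats 1000000 in
/-- Let `ρ` be a density operator (positive, trace-class, trace one) on a separable complex
Hilbert space, with eigenvalue sequence `lam` sorted in decreasing order and counted with
multiplicity (encoded by the spectral decomposition `ρ x = ∑' n, lam n • ⟪v n, x⟫ • v n`
with `v` orthonormal, `lam` antitone, nonnegative, summable with sum one).  Let `e` be an
orthonormal basis and `p` the decreasing rearrangement of the diagonal `⟪e n, ρ (e n)⟫`.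
Then for every `φ` convex on `[0,1]` with `φ 0 = 0` and every strictly decreasing `h`,
assuming `φ ∘ lam` and `φ ∘ p` summable, `h (∑' n, φ (lam n)) ≤ h (∑' n, φ (p n))`;
that is, `𝐇_{(h,φ)}(ρ) ≤ H_{(h,φ)}(p)`. -/
theorem quantum_entropy_le_diagonal_entropy
    {H : Type*} [NormedAddCommGroup H] [InnerProductSpace ℂ H] [CompleteSpace H]
    (ρ : H →L[ℂ] H) (hpos : ρ.IsPositive)
    (lam : ℕ → ℝ) (v : ℕ → H)
    (hlam0 : ∀ n, 0 ≤ lam n) (hlam_anti : Antitone lam)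
    (hlam_sum : Summable lam) (hlam1 : ∑' n, lam n = 1)
    (hv : Orthonormal ℂ v)
    (hspec : ∀ x, ρ x = ∑' n, lam n • (⟪v n, x⟫_ℂ • v n))
    (e : HilbertBasis ℕ ℂ H)
    (p : ℕ → ℝ) (σ : ℕ ≃ ℕ)
    (hpdiag : ∀ n, p n = (⟪e (σ n), ρ (e (σ n))⟫_ℂ).re)
    (hpa : Antitone p)
    (φ h : ℝ → ℝ)
    (hφ : ConvexOn ℝ (Set.Icc (0 : ℝ) 1) φ) (hφ0 : φ 0 = 0)
    (hh : StrictAnti h)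
    (hsl : Summable (fun n => φ (lam n))) (hsp : Summable (fun n => φ (p n))) :
    h (∑' n, φ (lam n)) ≤ h (∑' n, φ (p n)) := by


  classical
  set b : ℕ → ℕ → ℝ := fun m n => ‖⟪v m, e n⟫_ℂ‖ ^ 2 with hb
  have hb0 : ∀ m n, 0 ≤ b m n := fun m n => by positivity
  -- spectral decomposition as a HasSum
  have h1 : ∀ x : H, HasSum (fun m => ((lam m : ℂ) * ⟪v m, x⟫_ℂ) • v m) (ρ x) := by
    intro x
    have hsummable : Summable (fun m => ((lam m : ℂ) * ⟪v m, x⟫_ℂ) • v m) := by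
      have hiff := hv.orthogonalFamily.summable_iff_norm_sq_summable
        (fun m => ((lam m : ℂ) * ⟪v m, x⟫_ℂ))
      simp only [LinearIsometry.toSpanSingleton_apply] at hiff
      rw [hiff]
      refine Summable.of_nonneg_of_le (fun m => by positivity) ?_
        (((hv.inner_products_summable x)).mul_left ((lam 0 + 1)^2))
      intro m
      have he : ‖(lam m : ℂ) * ⟪v m, x⟫_ℂ‖ ^ 2 = (lam m)^2 * ‖⟪v m, x⟫_ℂ‖^2 := by
        rw [norm_mul, mul_pow, Complex.norm_real, Real.norm_eq_abs, sq_abs]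
      rw [he]
      have hm0 : lam m ≤ lam 0 := hlam_anti (Nat.zero_le m)
      have ht : (0:ℝ) ≤ ‖⟪v m, x⟫_ℂ‖^2 := by positivity
      have hsq : lam m ^ 2 ≤ (lam 0 + 1)^2 := by nlinarith [hlam0 m]
      exact mul_le_mul_of_nonneg_right hsq ht
    have hpt : ∀ m, lam m • (⟪v m, x⟫_ℂ • v m) = ((lam m : ℂ) * ⟪v m, x⟫_ℂ) • v m := by
      intro m
      rw [← smul_assoc]
      norm_num [Complex.real_smul]
    rw [hspec x, tsum_congr hpt]
    exact hsummable.hasSum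
  -- diagonal entries as sums
  have h2 : ∀ j : ℕ, HasSum (fun m => lam m * b m j) ((⟪e j, ρ (e j)⟫_ℂ).re) := by
    intro j
    have h' := ((h1 (e j)).mapL (innerSL ℂ (e j))).mapL Complex.reCLM
    have hpt : ∀ m,
        Complex.reCLM ((innerSL ℂ (e j)) (((lam m : ℂ) * ⟪v m, e j⟫_ℂ) • v m)) = lam m * b m j := by
      intro m
      simp only [Complex.reCLM_apply, innerSL_apply_apply]
      rw [inner_smul_right, mul_assoc, ← inner_conj_symm (e j) (v m), Complex.mul_conj,
        ← Complex.ofReal_mul, Complex.ofReal_re]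
      simp only [hb]
      rw [Complex.normSq_eq_norm_sq]
    simp only [hpt] at h'
    exact h'
  have hp_formula : ∀ n, HasSum (fun m => lam m * b m (σ n)) (p n) :=
    fun n => (hpdiag n) ▸ h2 (σ n)
  -- Parseval for each v m
  have h3 : ∀ m, HasSum (fun n => b m n) 1 := by
    intro m
    have h' := (e.hasSum_inner_mul_inner (v m) (v m)).mapL Complex.reCLM
    have hvm : (⟪v m, v m⟫_ℂ) = 1 := by
      have := orthonormal_iff_ite.mp hv m m
      simpa using this
    rw [hvm] at h'
    have hpt : ∀ n, Complex.reCLM (⟪v m, e n⟫_ℂ * ⟪e n, v m⟫_ℂ) = b m n := by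
      intro n
      rw [← inner_conj_symm (e n) (v m), Complex.mul_conj]
      simp only [Complex.reCLM_apply, Complex.ofReal_re, hb]
      rw [Complex.normSq_eq_norm_sq]
    have h1re : Complex.reCLM (1 : ℂ) = 1 := by simp
    rw [h1re] at h'
    simp only [hpt] at h'
    exact h'
  -- finite partial sums of p
  have hstep : ∀ N : ℕ, ∑ i ∈ Finset.range N, p i
      = ∑' m, lam m * ∑ i ∈ Finset.range N, b m (σ i) := by
    intro N
    have e1 : ∑ i ∈ Finset.range N, p i = ∑ i ∈ Finset.range N, ∑' m, lam m * b m (σ i) :=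
      Finset.sum_congr rfl (fun i _ => ((hp_formula i).tsum_eq).symm)
    have e2 : ∑' m, ∑ i ∈ Finset.range N, (lam m * b m (σ i))
        = ∑ i ∈ Finset.range N, ∑' m, lam m * b m (σ i) :=
      Summable.tsum_finsetSum (fun i _ => (hp_formula i).summable)
    have e3 : ∀ m, ∑ i ∈ Finset.range N, (lam m * b m (σ i))
        = lam m * ∑ i ∈ Finset.range N, b m (σ i) :=
      fun m => (Finset.mul_sum _ _ _).symm
    rw [e1, ← e2, tsum_congr e3]
  have hbsum : ∀ j, Summable (fun m => b m j) := fun j => hv.inner_products_summable (e j)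
  have hC1 : ∀ m N, ∑ i ∈ Finset.range N, b m (σ i) ≤ 1 := by
    intro m N
    have himg : ∑ i ∈ Finset.range N, b m (σ i) = ∑ j ∈ (Finset.range N).image σ, b m j :=
      (Finset.sum_image (fun x _ y _ hxy => σ.injective hxy)).symm
    rw [himg]
    exact (Summable.sum_le_tsum _ (fun j _ => hb0 m j) (h3 m).summable).trans_eq (h3 m).tsum_eq
  have hC0 : ∀ m N, (0:ℝ) ≤ ∑ i ∈ Finset.range N, b m (σ i) :=
    fun m N => Finset.sum_nonneg (fun i _ => hb0 m (σ i))
  have hCs : ∀ N, Summable (fun m => ∑ i ∈ Finset.range N, b m (σ i)) :=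
    fun N => summable_sum (fun i _ => hbsum (σ i))
  have hCN : ∀ N : ℕ, ∑' m, (∑ i ∈ Finset.range N, b m (σ i)) ≤ (N : ℝ) := by
    intro N
    rw [Summable.tsum_finsetSum (fun i _ => hbsum (σ i))]
    calc ∑ i ∈ Finset.range N, ∑' m, b m (σ i)
        ≤ ∑ i ∈ Finset.range N, (1:ℝ) := by
          apply Finset.sum_le_sum
          intro i _
          have := hv.tsum_inner_products_le (e (σ i))
          have hnorm : ‖e (σ i)‖ ^ 2 = 1 := by rw [e.orthonormal.1 (σ i)]; norm_num
          rw [hnorm] at this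
          exact this
    _ = (N : ℝ) := by simp
  have hmaj : ∀ N, ∑ i ∈ Finset.range N, p i ≤ ∑ i ∈ Finset.range N, lam i := by
    intro N
    rw [hstep N]
    exact maj_aux lam _ N hlam0 hlam_anti hlam_sum (hC0 · N) (hC1 · N) (hCs N) (hCN N)
  have hp0 : ∀ n, 0 ≤ p n := by
    intro n
    rw [← (hp_formula n).tsum_eq]
    exact tsum_nonneg (fun m => mul_nonneg (hlam0 m) (hb0 m (σ n)))
  have hbound1 : ∀ N, ∑ i ∈ Finset.range N, p i ≤ 1 := by
    intro N
    refine (hmaj N).trans ?_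
    rw [← hlam1]
    exact Summable.sum_le_tsum _ (fun i _ => hlam0 i) hlam_sum
  have hps : Summable p := summable_of_sum_range_le hp0 hbound1
  have hp1 : ∑' n, p n = 1 := by
    refine le_antisymm (Real.tsum_le_of_sum_range_le hp0 hbound1) ?_
    have hge : ∀ F : Finset ℕ, ∑ m ∈ F, lam m ≤ ∑' n, p n := by
      intro F
      have hlim : Tendsto (fun K => ∑ m ∈ F, lam m * ∑ i ∈ Finset.range K, b m (σ i)) atTop
          (nhds (∑ m ∈ F, lam m * 1)) := by
        apply tendsto_finset_sum
        intro m _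
        have hK : HasSum (fun i => b m (σ i)) 1 := (σ.hasSum_iff).mpr (h3 m)
        exact (hK.tendsto_sum_nat).const_mul (lam m)
      have hbound : ∀ K, ∑ m ∈ F, lam m * ∑ i ∈ Finset.range K, b m (σ i) ≤ ∑' n, p n := by
        intro K
        have hsm : Summable (fun m => lam m * ∑ i ∈ Finset.range K, b m (σ i)) :=
          Summable.of_nonneg_of_le (fun m => mul_nonneg (hlam0 m) (hC0 m K))
            (fun m => by nlinarith [hC1 m K, hC0 m K, hlam0 m]) hlam_sum
        have h1' : ∑ m ∈ F, lam m * ∑ i ∈ Finset.range K, b m (σ i)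
            ≤ ∑' m, lam m * ∑ i ∈ Finset.range K, b m (σ i) :=
          Summable.sum_le_tsum F (fun m _ => mul_nonneg (hlam0 m) (hC0 m K)) hsm
        rw [← hstep K] at h1'
        exact h1'.trans (Summable.sum_le_tsum _ (fun i _ => hp0 i) hps)
      have := le_of_tendsto hlim (Filter.Eventually.of_forall hbound)
      simpa using this
    have h2' : ∑' m, lam m ≤ ∑' n, p n := Summable.tsum_le_of_sum_le hlam_sum hge
    linarith
  have hmain := schur_helper φ hφ hφ0 lam p hlam0 hlam_anti hlam_sum hlam1 hp0 hpa hps hp1 hmaj hsl hsp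
  exact hh.antitone hmain
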